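/- Let H be a real Hilbert space and E : H → ℝ Fréchet differentiable. Let ξ : [0,∞) → H be differentiable with ξ'(t) = −∇E(ξ(t)) for all t ≥ 0. Suppose there exist γ∞ ∈ H and a sequence t_k → ∞ with ξ(t_k) → γ∞ in H, and suppose E satisfies the Łojasiewicz–Simon inequality at γ∞ with constants Z > 0, δ ∈ (0,1], θ ∈ [1/2,1). Then ξ(t) converges strongly to γ∞ in H as t → ∞. -/

import Mathlib

open Filter

/-- Full convergence of a gradient flow from subconvergence via the
Łojasiewicz–Simon inequality: if `ξ' = −∇E(ξ)` on `[0,∞)`, `ξ(t_k) → γlim` along some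
sequence `t_k → ∞`, and `E` satisfies a Łojasiewicz–Simon inequality at `γlim`, then
`ξ(t) → γlim` strongly as `t → ∞`. -/
theorem stmt10 {H : Type*} [NormedAddCommGroup H] [InnerProductSpace ℝ H]
    [CompleteSpace H]
    (E : H → ℝ) (hE : Differentiable ℝ E)
    (ξ : ℝ → H) (hξ : ∀ t : ℝ, 0 ≤ t → HasDerivAt ξ (-(gradient E (ξ t))) t)
    (γlim : H) (tk : ℕ → ℝ)
    (htk : Tendsto tk atTop atTop)
    (hsub : Tendsto (fun j => ξ (tk j)) atTop (nhds γlim))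
    (Z δ θ : ℝ) (hZ : 0 < Z) (hδ : δ ∈ Set.Ioc (0:ℝ) 1)
    (hθ : θ ∈ Set.Ico (1/2 : ℝ) 1)
    (hLS : ∀ η : H, ‖η - γlim‖ < δ → Z * |E η - E γlim| ^ θ ≤ ‖gradient E η‖) :
    Tendsto ξ atTop (nhds γlim) := by
  obtain ⟨hδ0, hδ1⟩ := hδ
  obtain ⟨hθ2, hθ1⟩ := hθ
  have h1θ : (0:ℝ) < 1 - θ := by linarith
  -- derivative of the energy along the flow
  have hφ' : ∀ t : ℝ, 0 ≤ t →
      HasDerivAt (fun s => E (ξ s)) (-(‖gradient E (ξ t)‖ ^ 2)) t := by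
    intro t ht
    have h1 : HasFDerivAt E (InnerProductSpace.toDual ℝ H (gradient E (ξ t))) (ξ t) :=
      ((hE (ξ t)).hasGradientAt).hasFDerivAt
    have h2 := h1.comp_hasDerivAt t (hξ t ht)
    exact h2.congr_deriv (by
      rw [InnerProductSpace.toDual_apply_apply, inner_neg_right, real_inner_self_eq_norm_sq])
  -- the energy is nonincreasing along the flow
  have hmono : ∀ a b : ℝ, 0 ≤ a → a ≤ b → E (ξ b) ≤ E (ξ a) := by
    intro a b ha hab
    have hcont : ContinuousOn (fun s => E (ξ s)) (Set.Icc a b) := fun x hx =>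
      ((hφ' x (ha.trans hx.1)).continuousAt).continuousWithinAt
    have := image_le_of_deriv_right_le_deriv_boundary (f := fun s => E (ξ s))
      (f' := fun s => -(‖gradient E (ξ s)‖ ^ 2)) (B := fun _ => E (ξ a)) (B' := fun _ => 0)
      hcont (fun x hx => (hφ' x (ha.trans hx.1)).hasDerivWithinAt) le_rfl
      continuousOn_const
      (fun x _ => (hasDerivAt_const x (E (ξ a))).hasDerivWithinAt)
      (fun x _ => neg_nonpos.2 (sq_nonneg _))
    exact this (Set.right_mem_Icc.2 hab)
  -- the energy converges to `E γlim` along the subsequence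
  have hφtk : Tendsto (fun j => E (ξ (tk j))) atTop (nhds (E γlim)) :=
    (hE.continuous.tendsto γlim).comp hsub
  -- the energy is bounded below by `E γlim`
  have hφ_ge : ∀ t : ℝ, 0 ≤ t → E γlim ≤ E (ξ t) := by
    intro t ht
    refine le_of_tendsto hφtk ?_
    filter_upwards [htk.eventually_ge_atTop t] with j hj
    exact hmono t (tk j) ht hj
  by_cases hA : ∃ t0 : ℝ, 0 ≤ t0 ∧ E (ξ t0) = E γlim
  · -- degenerate case: the energy attains its limit value, the flow is eventually constant
    obtain ⟨t0, ht0, hφt0⟩ := hA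
    have hconstφ : ∀ t, t0 ≤ t → E (ξ t) = E γlim := fun t ht =>
      le_antisymm (hφt0 ▸ hmono t0 t ht0 ht) (hφ_ge t (ht0.trans ht))
    have hgrad0 : ∀ x, t0 ≤ x → gradient E (ξ x) = 0 := by
      intro x hx
      have hconst : HasDerivWithinAt (fun s => E (ξ s)) 0 (Set.Ici x) x := by
        refine (hasDerivWithinAt_const x _ (E γlim)).congr ?_ (hconstφ x hx)
        intro y hy
        exact hconstφ y (hx.trans hy)
      have hd : HasDerivWithinAt (fun s => E (ξ s)) (-(‖gradient E (ξ x)‖ ^ 2)) (Set.Ici x) x :=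
        (hφ' x (ht0.trans hx)).hasDerivWithinAt
      have hu : UniqueDiffWithinAt ℝ (Set.Ici x) x := (uniqueDiffOn_Ici x) x Set.self_mem_Ici
      have h0 : -(‖gradient E (ξ x)‖ ^ 2) = 0 := by
        rw [← hd.derivWithin hu, hconst.derivWithin hu]
      have : ‖gradient E (ξ x)‖ = 0 := by nlinarith [norm_nonneg (gradient E (ξ x))]
      exact norm_eq_zero.1 this
    have hconstξ : ∀ t, t0 ≤ t → ξ t = ξ t0 := by
      intro t ht
      have hcont : ContinuousOn ξ (Set.Icc t0 t) := fun x hx =>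
        ((hξ x (ht0.trans hx.1)).continuousAt).continuousWithinAt
      have hderiv : ∀ x ∈ Set.Ico t0 t, HasDerivWithinAt ξ 0 (Set.Ici x) x := by
        intro x hx
        have := (hξ x (ht0.trans hx.1)).hasDerivWithinAt (s := Set.Ici x)
        rwa [hgrad0 x hx.1, neg_zero] at this
      exact constant_of_has_deriv_right_zero hcont hderiv t (Set.right_mem_Icc.2 ht)
    have hξt0 : ξ t0 = γlim := by
      have h1 : Tendsto (fun j => ξ (tk j)) atTop (nhds (ξ t0)) := by
        refine Tendsto.congr' ?_ tendsto_const_nhds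
        filter_upwards [htk.eventually_ge_atTop t0] with j hj
        exact (hconstξ (tk j) hj).symm
      exact tendsto_nhds_unique h1 hsub
    refine Tendsto.congr' ?_ (tendsto_const_nhds (x := γlim))
    filter_upwards [eventually_ge_atTop t0] with t ht
    rw [hconstξ t ht, hξt0]
  · -- main case: the energy stays strictly above `E γlim`
    push_neg at hA
    have hpos : ∀ t : ℝ, 0 ≤ t → E γlim < E (ξ t) := fun t ht =>
      lt_of_le_of_ne (hφ_ge t ht) (Ne.symm (hA t ht))
    have hκ0 : (0:ℝ) < (1 - θ) * Z := mul_pos h1θ hZ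
    have hgpos : ∀ t, 0 ≤ t → 0 < (E (ξ t) - E γlim) ^ (1 - θ) := fun t ht =>
      Real.rpow_pos_of_pos (sub_pos.2 (hpos t ht)) _
    have hg' : ∀ t, 0 ≤ t → HasDerivAt (fun s => (E (ξ s) - E γlim) ^ (1 - θ))
        (-(‖gradient E (ξ t)‖ ^ 2) * ((1 - θ) * (E (ξ t) - E γlim) ^ (1 - θ - 1))) t := by
      intro t ht
      have h1 : HasDerivAt (fun s => E (ξ s) - E γlim) (-(‖gradient E (ξ t)‖ ^ 2)) t :=
        (hφ' t ht).sub_const (E γlim)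
      have h2 := h1.rpow_const (p := 1 - θ) (Or.inl (ne_of_gt (sub_pos.2 (hpos t ht))))
      convert h2 using 1
      ring
    -- key trapping estimate
    have key : ∀ a : ℝ, 0 ≤ a →
        ‖ξ a - γlim‖ + 2 * (E (ξ a) - E γlim) ^ (1 - θ) / ((1 - θ) * Z) < δ →
        ∀ t, a ≤ t → ‖ξ t - γlim‖ ≤
          ‖ξ a - γlim‖ + 2 * (E (ξ a) - E γlim) ^ (1 - θ) / ((1 - θ) * Z) := by
      intro a ha hr t hat
      have hB' : ∀ s, 0 ≤ s → HasDerivAt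
          (fun u => ‖ξ a - γlim‖ + (2 * (E (ξ a) - E γlim) ^ (1 - θ)
            - 2 * (E (ξ u) - E γlim) ^ (1 - θ)) / ((1 - θ) * Z))
          (2 * (‖gradient E (ξ s)‖ ^ 2 * ((1 - θ) * (E (ξ s) - E γlim) ^ (1 - θ - 1)))
            / ((1 - θ) * Z)) s := by
        intro s hs
        have h1 := (((hg' s hs).const_mul 2).const_sub
          (2 * (E (ξ a) - E γlim) ^ (1 - θ))).div_const ((1 - θ) * Z)
        have h2 := h1.const_add ‖ξ a - γlim‖
        exact h2.congr_deriv (by ring)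
      have hBle : ∀ s, 0 ≤ s → ‖ξ a - γlim‖ + (2 * (E (ξ a) - E γlim) ^ (1 - θ)
            - 2 * (E (ξ s) - E γlim) ^ (1 - θ)) / ((1 - θ) * Z) ≤
          ‖ξ a - γlim‖ + 2 * (E (ξ a) - E γlim) ^ (1 - θ) / ((1 - θ) * Z) := by
        intro s hs
        have h1 := hgpos s hs
        have h2 : (2 * (E (ξ a) - E γlim) ^ (1 - θ)
            - 2 * (E (ξ s) - E γlim) ^ (1 - θ)) / ((1 - θ) * Z) ≤
            2 * (E (ξ a) - E γlim) ^ (1 - θ) / ((1 - θ) * Z) := by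
          gcongr
          linarith
        linarith
      have hfence := image_norm_le_of_norm_deriv_right_lt_deriv_boundary'
        (f := fun s => ξ s - γlim) (f' := fun s => -(gradient E (ξ s))) (a := a) (b := t)
        (fun s hs => (((hξ s (ha.trans hs.1)).sub_const γlim).continuousAt).continuousWithinAt)
        (fun s hs => ((hξ s (ha.trans hs.1)).sub_const γlim).hasDerivWithinAt)
        (B := fun u => ‖ξ a - γlim‖ + (2 * (E (ξ a) - E γlim) ^ (1 - θ)
            - 2 * (E (ξ u) - E γlim) ^ (1 - θ)) / ((1 - θ) * Z))
        (B' := fun s => 2 * (‖gradient E (ξ s)‖ ^ 2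
            * ((1 - θ) * (E (ξ s) - E γlim) ^ (1 - θ - 1))) / ((1 - θ) * Z))
        (by simp)
        (fun s hs => ((hB' s (ha.trans hs.1)).continuousAt).continuousWithinAt)
        (fun s hs => (hB' s (ha.trans hs.1)).hasDerivWithinAt)
        ?_
      · exact le_trans (hfence (Set.mem_Icc.2 ⟨hat, le_rfl⟩)) (hBle t (ha.trans hat))
      · -- the bound at touching points, from the Łojasiewicz–Simon inequality
        intro x hx htouch
        have hx0 : 0 ≤ x := ha.trans hx.1
        have hd : 0 < E (ξ x) - E γlim := sub_pos.2 (hpos x hx0)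
        have hlt : ‖ξ x - γlim‖ < δ := by
          rw [htouch]
          exact lt_of_le_of_lt (hBle x hx0) hr
        have hLSx := hLS (ξ x) hlt
        rw [abs_of_pos hd] at hLSx
        have hdp : 0 < (E (ξ x) - E γlim) ^ θ := Real.rpow_pos_of_pos hd θ
        have hdn : 0 < (E (ξ x) - E γlim) ^ (-θ) := Real.rpow_pos_of_pos hd (-θ)
        have hGpos : 0 < ‖gradient E (ξ x)‖ := lt_of_lt_of_le (mul_pos hZ hdp) hLSx
        rw [norm_neg]
        have e1 : (E (ξ x) - E γlim) ^ (1 - θ - 1) = (E (ξ x) - E γlim) ^ (-θ) := by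
          norm_num
        have e2 : (E (ξ x) - E γlim) ^ θ * (E (ξ x) - E γlim) ^ (-θ) = 1 := by
          rw [← Real.rpow_add hd]
          norm_num
        beta_reduce
        rw [e1]
        have h3 : Z * ‖gradient E (ξ x)‖ ≤
            ‖gradient E (ξ x)‖ ^ 2 * (E (ξ x) - E γlim) ^ (-θ) := by
          have h4 := mul_le_mul_of_nonneg_right hLSx
            (mul_pos hGpos hdn).le
          calc Z * ‖gradient E (ξ x)‖
              = Z * ‖gradient E (ξ x)‖ *
                ((E (ξ x) - E γlim) ^ θ * (E (ξ x) - E γlim) ^ (-θ)) := by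
                rw [e2, mul_one]
            _ = Z * (E (ξ x) - E γlim) ^ θ *
                (‖gradient E (ξ x)‖ * (E (ξ x) - E γlim) ^ (-θ)) := by ring
            _ ≤ ‖gradient E (ξ x)‖ *
                (‖gradient E (ξ x)‖ * (E (ξ x) - E γlim) ^ (-θ)) := h4
            _ = ‖gradient E (ξ x)‖ ^ 2 * (E (ξ x) - E γlim) ^ (-θ) := by ring
        rw [lt_div_iff₀ hκ0]
        nlinarith [mul_le_mul_of_nonneg_left h3 h1θ.le,
          mul_pos h1θ (mul_pos hZ hGpos)]
    -- conclusion
    rw [Metric.tendsto_atTop]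
    intro ε hε
    have hε' : 0 < min ε δ := lt_min hε hδ0
    have hgto : Tendsto (fun j => (E (ξ (tk j)) - E γlim) ^ (1 - θ)) atTop (nhds 0) := by
      have h1 : Tendsto (fun j => E (ξ (tk j)) - E γlim) atTop (nhds 0) := by
        simpa using hφtk.sub_const (E γlim)
      have h2 : ContinuousAt (fun x : ℝ => x ^ (1 - θ)) 0 :=
        Real.continuousAt_rpow_const 0 _ (Or.inr h1θ.le)
      have h3 := h2.tendsto.comp h1
      simpa [Function.comp_def, Real.zero_rpow (ne_of_gt h1θ)] using h3
    have hev1 : ∀ᶠ j in atTop, ‖ξ (tk j) - γlim‖ < min ε δ / 2 := by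
      have h := hsub (Metric.ball_mem_nhds γlim (half_pos hε'))
      filter_upwards [h] with j hj
      simpa [Metric.mem_ball, dist_eq_norm] using hj
    have hev2 : ∀ᶠ j in atTop,
        2 * (E (ξ (tk j)) - E γlim) ^ (1 - θ) / ((1 - θ) * Z) < min ε δ / 2 := by
      have h : Tendsto (fun j => 2 * (E (ξ (tk j)) - E γlim) ^ (1 - θ) / ((1 - θ) * Z))
          atTop (nhds 0) := by
        simpa using (hgto.const_mul 2).div_const ((1 - θ) * Z)
      exact h.eventually (gt_mem_nhds (half_pos hε'))
    obtain ⟨j, h1, h2, h3⟩ := (hev1.and (hev2.and (htk.eventually_ge_atTop 0))).exists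
    refine ⟨tk j, fun t ht => ?_⟩
    have hrδ : ‖ξ (tk j) - γlim‖ +
        2 * (E (ξ (tk j)) - E γlim) ^ (1 - θ) / ((1 - θ) * Z) < min ε δ := by
      linarith [h2]
    have hkey := key (tk j) h3 (lt_of_lt_of_le hrδ (min_le_right ε δ)) t ht
    rw [dist_eq_norm]
    exact lt_of_le_of_lt hkey (lt_of_lt_of_le hrδ (min_le_left ε δ))
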